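/- arXiv:2506.12497 — 2 statements merged into one kernel-verified Lean document; each statement's English description precedes it below -/
import Mathlib

section
/- Let (X, d) be a pseudometric space, let N be a positive integer, and let ρ ≥ 0 with κ := 4ρ < 1. Let x : ℕ → Fin N → X and c : ℕ → X be such that for every t, the point c(t) minimizes y ↦ (1/N) Σ_{i} d(y, x(t, i)) over X, and for every t and i, d(x(t+1, i), c(t)) ≤ ρ · d(x(t, i), c(t)). Define D(t) := max_{i, j} d(x(t, i), x(t, j)). Then for every t, D(t) ≤ κ^t · D(0); in particular D(t) → 0 as t → ∞. -/
/-- Self-contained version of the paper's Theorem 1: if each `c t` is an exact barycenter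
(minimizer of the average distance to the `x t i`) and each update contracts toward `c t`
with factor `ρ`, with `κ := 4ρ < 1`, then the maximal pairwise discrepancy
`D t := max_{i,j} d(x t i, x t j)` satisfies `D t ≤ κ^t * D 0` and tends to `0`. -/
theorem wbc_convergence_with_exact_barycenters {X : Type*} [PseudoMetricSpace X]
    {N : ℕ} (hN : 0 < N) (ρ : ℝ) (hρ : 0 ≤ ρ) (hκ : 4 * ρ < 1)
    (x : ℕ → Fin N → X) (c : ℕ → X)
    (hbary : ∀ t, ∀ y : X,
      (1 / (N : ℝ)) * ∑ i, dist (c t) (x t i) ≤ (1 / (N : ℝ)) * ∑ i, dist y (x t i))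
    (hcontract : ∀ t i, dist (x (t + 1) i) (c t) ≤ ρ * dist (x t i) (c t))
    (D : ℕ → ℝ)
    (hD : ∀ t, D t = ⨆ i : Fin N, ⨆ j : Fin N, dist (x t i) (x t j)) :
    (∀ t, D t ≤ (4 * ρ) ^ t * D 0) ∧
      Filter.Tendsto D Filter.atTop (nhds 0) := by
  haveI : Nonempty (Fin N) := ⟨⟨0, hN⟩⟩
  have hNpos : (0 : ℝ) < N := by exact_mod_cast hN
  -- every pairwise distance is at most D t
  have hle : ∀ t (i j : Fin N), dist (x t i) (x t j) ≤ D t := by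
    intro t i j
    rw [hD t]
    exact le_trans
      (le_ciSup (f := fun j => dist (x t i) (x t j))
        (Set.Finite.bddAbove (Set.finite_range _)) j)
      (le_ciSup (f := fun i => ⨆ j, dist (x t i) (x t j))
        (Set.Finite.bddAbove (Set.finite_range _)) i)
  have hDnonneg : ∀ t, 0 ≤ D t := by
    intro t
    have := hle t ⟨0, hN⟩ ⟨0, hN⟩
    exact le_trans dist_nonneg this
  -- distance to barycenter bounded by 2 D t
  have hbc : ∀ t (i : Fin N), dist (x t i) (c t) ≤ 2 * D t := by
    intro t i
    have h1 : (1 / (N : ℝ)) * ∑ k, dist (c t) (x t k) ≤ D t := by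
      calc (1 / (N : ℝ)) * ∑ k, dist (c t) (x t k)
          ≤ (1 / (N : ℝ)) * ∑ k, dist (x t i) (x t k) := hbary t (x t i)
        _ ≤ (1 / (N : ℝ)) * ∑ _k : Fin N, D t := by
            apply mul_le_mul_of_nonneg_left _ (by positivity)
            exact Finset.sum_le_sum fun k _ => hle t i k
        _ = D t := by
            rw [Finset.sum_const, Finset.card_univ, Fintype.card_fin, nsmul_eq_mul]
            field_simp
    have h2 : dist (x t i) (c t)
        = (1 / (N : ℝ)) * ∑ _k : Fin N, dist (x t i) (c t) := by
      rw [Finset.sum_const, Finset.card_univ, Fintype.card_fin, nsmul_eq_mul]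
      field_simp
    rw [h2]
    calc (1 / (N : ℝ)) * ∑ _k : Fin N, dist (x t i) (c t)
        ≤ (1 / (N : ℝ)) * ∑ k, (dist (x t i) (x t k) + dist (c t) (x t k)) := by
          apply mul_le_mul_of_nonneg_left _ (by positivity)
          refine Finset.sum_le_sum fun k _ => ?_
          calc dist (x t i) (c t) ≤ dist (x t i) (x t k) + dist (x t k) (c t) :=
                dist_triangle _ _ _
            _ = dist (x t i) (x t k) + dist (c t) (x t k) := by rw [dist_comm (x t k)]
      _ = (1 / (N : ℝ)) * ∑ k, dist (x t i) (x t k)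
          + (1 / (N : ℝ)) * ∑ k, dist (c t) (x t k) := by
          rw [Finset.sum_add_distrib, mul_add]
      _ ≤ D t + D t := by
          refine add_le_add ?_ h1
          calc (1 / (N : ℝ)) * ∑ k, dist (x t i) (x t k)
              ≤ (1 / (N : ℝ)) * ∑ _k : Fin N, D t := by
                apply mul_le_mul_of_nonneg_left _ (by positivity)
                exact Finset.sum_le_sum fun k _ => hle t i k
            _ = D t := by
                rw [Finset.sum_const, Finset.card_univ, Fintype.card_fin, nsmul_eq_mul]
                field_simp
      _ = 2 * D t := by ring
  -- one-step contraction
  have hstep : ∀ t, D (t + 1) ≤ 4 * ρ * D t := by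
    intro t
    rw [hD (t + 1)]
    refine ciSup_le fun i => ciSup_le fun j => ?_
    calc dist (x (t + 1) i) (x (t + 1) j)
        ≤ dist (x (t + 1) i) (c t) + dist (x (t + 1) j) (c t) := by
          rw [dist_comm (x (t + 1) j)]; exact dist_triangle _ _ _
      _ ≤ ρ * dist (x t i) (c t) + ρ * dist (x t j) (c t) :=
          add_le_add (hcontract t i) (hcontract t j)
      _ ≤ ρ * (2 * D t) + ρ * (2 * D t) :=
          add_le_add (mul_le_mul_of_nonneg_left (hbc t i) hρ)
            (mul_le_mul_of_nonneg_left (hbc t j) hρ)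
      _ = 4 * ρ * D t := by ring
  have hmain : ∀ t, D t ≤ (4 * ρ) ^ t * D 0 := by
    intro t
    induction t with
    | zero => simp
    | succ n ih =>
        calc D (n + 1) ≤ 4 * ρ * D n := hstep n
          _ ≤ 4 * ρ * ((4 * ρ) ^ n * D 0) :=
              mul_le_mul_of_nonneg_left ih (by positivity)
          _ = (4 * ρ) ^ (n + 1) * D 0 := by ring
  refine ⟨hmain, ?_⟩
  have h0 : Filter.Tendsto (fun t => (4 * ρ) ^ t * D 0) Filter.atTop (nhds 0) := by
    have := tendsto_pow_atTop_nhds_zero_of_lt_one (by positivity : (0:ℝ) ≤ 4 * ρ) hκ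
    simpa using this.mul_const (D 0)
  exact squeeze_zero hDnonneg hmain h0
end

section
/- Let (X, d) be a pseudometric space, let L ≥ 0, γ ≥ 0, ε ≥ 0, λ > 0, and let F, F̂ : X → ℝ both be L-Lipschitz with respect to d. Let S ⊆ X be a γ-net of X (for every x ∈ X there exists s ∈ S with d(x, s) ≤ γ) with |F̂(s) − F(s)| ≤ ε for every s ∈ S. Suppose x* ∈ X satisfies F(x) ≥ F(x*) + λ · d(x, x*) for every x ∈ X, and x̂ ∈ X satisfies F̂(x̂) ≤ F̂(x*). Then d(x̂, x*) ≤ 2(2Lγ + ε) / λ. -/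
/-- Combination of Steps 2 and 3 in the proof of the paper's Theorem 2: with `F, Fhat`
both `L`-Lipschitz, `S` a `γ`-net on which `|Fhat − F| ≤ ε`, `xstar` a point around which
`F` grows linearly with rate `lam`, and `Fhat xhat ≤ Fhat xstar`, one gets
`d(xhat, xstar) ≤ 2(2Lγ + ε)/lam`. -/
theorem net_deviation_barycenter_stability {X : Type*} [PseudoMetricSpace X]
    (L γ ε lam : ℝ) (hL : 0 ≤ L) (hγ : 0 ≤ γ) (hε : 0 ≤ ε) (hlam : 0 < lam)
    (F Fhat : X → ℝ)
    (hF : ∀ x y : X, |F x - F y| ≤ L * dist x y)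
    (hFhat : ∀ x y : X, |Fhat x - Fhat y| ≤ L * dist x y)
    (S : Set X) (hnet : ∀ x : X, ∃ s ∈ S, dist x s ≤ γ)
    (hdev : ∀ s ∈ S, |Fhat s - F s| ≤ ε)
    (xstar : X) (hgrowth : ∀ x : X, F xstar + lam * dist x xstar ≤ F x)
    (xhat : X) (hmin : Fhat xhat ≤ Fhat xstar) :
    dist xhat xstar ≤ 2 * (2 * L * γ + ε) / lam := by
  have key : ∀ x : X, |Fhat x - F x| ≤ 2 * L * γ + ε := by
    intro x
    obtain ⟨s, hs, hds⟩ := hnet x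
    have h1 := hFhat x s
    have h2 := hdev s hs
    have h3 := hF s x
    have hLs : L * dist x s ≤ L * γ := mul_le_mul_of_nonneg_left hds hL
    have hsx : L * dist s x ≤ L * γ := by
      rw [dist_comm]; exact mul_le_mul_of_nonneg_left hds hL
    calc |Fhat x - F x| = |(Fhat x - Fhat s) + (Fhat s - F s) + (F s - F x)| := by ring_nf
      _ ≤ |Fhat x - Fhat s| + |Fhat s - F s| + |F s - F x| := by
          exact (abs_add_le _ _).trans (add_le_add_left (abs_add_le _ _) _)
      _ ≤ L * γ + ε + L * γ :=
          add_le_add (add_le_add (h1.trans hLs) h2) (h3.trans hsx)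
      _ = 2 * L * γ + ε := by ring
  have k1 := key xhat
  have k2 := key xstar
  have hg := hgrowth xhat
  rw [abs_le] at k1 k2
  rw [le_div_iff₀ hlam]
  nlinarith [k1.1, k1.2, k2.1, k2.2]
end
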